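/- Let G be a finite simple graph, let P be a longest path in G, and let H be a connected component of G − V(P). Then no two attachment points of H are consecutive vertices of P; that is, if s and s' are distinct vertices of P each having a neighbor in H, then s and s' are not adjacent along P. -/

import Mathlib

open SimpleGraph

/-- `p` is a longest path in the graph `G`. -/
def IsLongestPath {V : Type} (G : SimpleGraph V) {u v : V} (p : G.Walk u v) : Prop :=
  p.IsPath ∧ ∀ (a b : V) (q : G.Walk a b), q.IsPath → q.length ≤ p.length

private lemma exists_split {V : Type} {G : SimpleGraph V} {x y : V} (p : G.Walk x y) :
    ∀ (i : ℕ), i < p.length → ∀ (s s' : V), p.getVert i = s → p.getVert (i + 1) = s' →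
    ∃ (p1 : G.Walk x s) (hss' : G.Adj s s') (p2 : G.Walk s' y),
      p = p1.append (SimpleGraph.Walk.cons hss' p2) ∧ p1.length = i := by
  induction p with
  | nil => intro i hi; simp at hi
  | @cons u v w a q ih =>
    intro i hi s s' h1 h2
    cases i with
    | zero =>
      have hv : v = s' := by
        simpa [SimpleGraph.Walk.getVert_cons_succ, SimpleGraph.Walk.getVert_zero] using h2
      have hu : u = s := by simpa [SimpleGraph.Walk.getVert_zero] using h1
      subst hv; subst hu
      exact ⟨SimpleGraph.Walk.nil, a, q, rfl, rfl⟩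
    | succ i =>
      have hi' : i < q.length := by
        simpa [SimpleGraph.Walk.length_cons, Nat.succ_lt_succ_iff] using hi
      have h1' : q.getVert i = s := by
        simpa [SimpleGraph.Walk.getVert_cons_succ] using h1
      have h2' : q.getVert (i + 1) = s' := by
        simpa [SimpleGraph.Walk.getVert_cons_succ] using h2
      obtain ⟨p1, hss', p2, hq, hl⟩ := ih i hi' s s' h1' h2'
      refine ⟨SimpleGraph.Walk.cons a p1, hss', p2, ?_, by simp [hl]⟩
      rw [SimpleGraph.Walk.cons_append, hq]

private lemma aux_consec {V : Type} [Fintype V] {G : SimpleGraph V} {x y : V} (p : G.Walk x y)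
    (hp : IsLongestPath G p) {s s' h h' : V}
    (hhp : h ∉ p.support) (hh'p : h' ∉ p.support)
    (hr : (G.induce {v : V | v ∉ p.support}).Reachable ⟨h, hhp⟩ ⟨h', hh'p⟩)
    (hhs : G.Adj h s) (hh's' : G.Adj h' s')
    (i : ℕ) (hi : i < p.length) (h1 : p.getVert i = s) (h2 : p.getVert (i + 1) = s') :
    False := by
  classical
  obtain ⟨p1, hss', p2, hps, hlen⟩ := exists_split p i hi s s' h1 h2
  obtain ⟨w0⟩ := hr
  set S : Set V := {v : V | v ∉ p.support} with hS
  let qP : (G.induce S).Path ⟨h, hhp⟩ ⟨h', hh'p⟩ := w0.toPath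
  have hq : (qP : (G.induce S).Walk ⟨h, hhp⟩ ⟨h', hh'p⟩).IsPath := qP.2
  let emb : G.induce S ↪g G := SimpleGraph.Embedding.induce S
  let Q : G.Walk h h' :=
    ((qP : (G.induce S).Walk ⟨h, hhp⟩ ⟨h', hh'p⟩).map emb.toHom).copy rfl rfl
  have hQpath : Q.IsPath := by
    refine (SimpleGraph.Walk.isPath_copy _ _ _).mpr ?_
    exact SimpleGraph.Walk.map_isPath_of_injective (Subtype.val_injective) hq
  have hQsupp : ∀ a ∈ Q.support, a ∉ p.support := by
    intro a ha
    rw [(SimpleGraph.Walk.support_copy _ _ _ : Q.support = _), SimpleGraph.Walk.support_map] at ha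
    obtain ⟨b, _, rfl⟩ := List.mem_map.mp ha
    exact b.2
  -- the new, longer walk
  let W : G.Walk x y :=
    p1.append (SimpleGraph.Walk.cons hhs.symm (Q.append (SimpleGraph.Walk.cons hh's' p2)))
  have hWsupp : W.support = p1.support ++ (Q.support ++ p2.support) := by
    show (p1.append _).support = _
    rw [SimpleGraph.Walk.support_append, SimpleGraph.Walk.support_cons,
      SimpleGraph.Walk.support_append, SimpleGraph.Walk.support_cons]
    simp
  have hpsupp : p.support = p1.support ++ p2.support := by
    rw [hps, SimpleGraph.Walk.support_append, SimpleGraph.Walk.support_cons]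
    simp
  have hpnodup : (p1.support ++ p2.support).Nodup := by
    rw [← hpsupp]; exact hp.1.2
  have hWpath : W.IsPath := by
    rw [SimpleGraph.Walk.isPath_def, hWsupp]
    rw [List.nodup_append]
    rw [List.nodup_append] at hpnodup ⊢
    refine ⟨hpnodup.1, ⟨hQpath.2, hpnodup.2.1, ?_⟩, ?_⟩
    · intro a haQ b hap2 hab; subst hab
      exact hQsupp a haQ (hpsupp ▸ List.mem_append_right _ hap2)
    · intro a hap1 b ha hab; subst hab
      rcases List.mem_append.mp ha with haQ | hap2
      · exact hQsupp a haQ (hpsupp ▸ List.mem_append_left _ hap1)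
      · exact hpnodup.2.2 a hap1 a hap2 rfl
  have hWlen : W.length = p.length + Q.length + 1 := by
    have hplen : p.length = p1.length + p2.length + 1 := by
      rw [hps, SimpleGraph.Walk.length_append, SimpleGraph.Walk.length_cons]; omega
    show (p1.append _).length = _
    rw [SimpleGraph.Walk.length_append, SimpleGraph.Walk.length_cons,
      SimpleGraph.Walk.length_append, SimpleGraph.Walk.length_cons]
    omega
  have := hp.2 x y W hWpath
  omega

/-- If `P` is a longest path in `G` and `H` is a component of `G - V(P)`, then no
two attachment points of `H` are consecutive on `P`. -/
theorem attachment_points_not_consecutive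
    {V : Type} [Fintype V] (G : SimpleGraph V) {x y : V}
    (p : G.Walk x y) (hp : IsLongestPath G p)
    (C : (G.induce {v : V | v ∉ p.support}).ConnectedComponent)
    (s s' : V) (hs : s ∈ p.support) (hs' : s' ∈ p.support) (hne : s ≠ s')
    (hats : ∃ h : {v : V | v ∉ p.support},
      (G.induce {v : V | v ∉ p.support}).connectedComponentMk h = C ∧ G.Adj ↑h s)
    (hats' : ∃ h : {v : V | v ∉ p.support},
      (G.induce {v : V | v ∉ p.support}).connectedComponentMk h = C ∧ G.Adj ↑h s') :
    ¬ ∃ i : ℕ, i < p.length ∧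
      ((p.getVert i = s ∧ p.getVert (i + 1) = s') ∨
       (p.getVert i = s' ∧ p.getVert (i + 1) = s)) := by
  rintro ⟨i, hi, hcase⟩
  obtain ⟨⟨h, hhp⟩, hC, hadj⟩ := hats
  obtain ⟨⟨h', hh'p⟩, hC', hadj'⟩ := hats'
  have hr : (G.induce {v : V | v ∉ p.support}).Reachable ⟨h, hhp⟩ ⟨h', hh'p⟩ :=
    SimpleGraph.ConnectedComponent.exact (hC.trans hC'.symm)
  rcases hcase with ⟨h1, h2⟩ | ⟨h1, h2⟩
  · exact aux_consec p hp hhp hh'p hr hadj hadj' i hi h1 h2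
  · exact aux_consec p hp hh'p hhp hr.symm hadj' hadj i hi h1 h2
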